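/- Let Q be the convex quadrilateral with vertices (0,0), (0,u), (s,t), (v,w), where s,t,u,v,w satisfy the standard conditions, and let ℓ be the line through the midpoints M1 = (v/2, (w+u)/2) and M2 = (s/2, t/2) of the diagonals of Q. Then: (i) ℓ contains the diagonal from (0,0) to (s,t) if and only if u = (vt − ws)/s; and (ii) ℓ contains the diagonal from (0,u) to (v,w) if and only if (2v − s)u + ws − vt = 0. -/

import Mathlib

noncomputable section

abbrev Pt : Type := EuclideanSpace ℝ (Fin 2)

/-- The point of the Euclidean plane with coordinates `(x, y)`. -/
def pt (x y : ℝ) : Pt := (WithLp.equiv 2 (Fin 2 → ℝ)).symm ![x, y]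

lemma pt_apply_zero (x y : ℝ) : pt x y 0 = x := rfl
lemma pt_apply_one (x y : ℝ) : pt x y 1 = y := rfl

lemma seg_subset_iff {A B : Pt} {L : AffineSubspace ℝ Pt} :
    segment ℝ A B ⊆ (L : Set Pt) ↔ A ∈ L ∧ B ∈ L :=
  ⟨fun h => ⟨h (left_mem_segment ℝ A B), h (right_mem_segment ℝ A B)⟩,
   fun hh => (L.convex).segment_subset hh.1 hh.2⟩

lemma memline {a b c d x y : ℝ} (hac : a ≠ c) :
    pt x y ∈ line[ℝ, pt a b, pt c d] ↔ (x - a) * (d - b) = (y - b) * (c - a) := by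
  have hrw : pt x y = (pt x y -ᵥ pt a b) +ᵥ pt a b := by simp
  rw [hrw, vadd_left_mem_affineSpan_pair]
  constructor
  · rintro ⟨r, hr⟩
    have h0 : (r • (pt c d -ᵥ pt a b)) 0 = (pt x y -ᵥ pt a b) 0 := by rw [hr]
    have h1 : (r • (pt c d -ᵥ pt a b)) 1 = (pt x y -ᵥ pt a b) 1 := by rw [hr]
    simp only [vsub_eq_sub, PiLp.smul_apply, PiLp.sub_apply, smul_eq_mul,
      pt_apply_zero, pt_apply_one] at h0 h1
    linear_combination (c - a) * h1 - (d - b) * h0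
  · intro h
    refine ⟨(x - a) / (c - a), ?_⟩
    have hca : c - a ≠ 0 := sub_ne_zero.mpr (Ne.symm hac)
    ext i
    fin_cases i <;>
      simp only [vsub_eq_sub, PiLp.smul_apply, PiLp.sub_apply, smul_eq_mul, pt,
        WithLp.equiv_symm_apply, WithLp.ofLp_toLp, Matrix.cons_val_zero, Matrix.cons_val_one,
        Matrix.head_cons, Fin.mk_one, Fin.zero_eta, Fin.isValue] <;>
      field_simp <;> linear_combination h

/-- For the quadrilateral with vertices `(0,0), (0,u), (s,t), (v,w)` (standard
conditions), the line `ℓ` through the midpoints of the diagonals contains the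
diagonal from `(0,0)` to `(s,t)` iff `u = (vt − ws)/s`, and contains the diagonal
from `(0,u)` to `(v,w)` iff `(2v − s)u + ws − vt = 0`. -/
theorem midpoint_diagonal_characterization (s t u v w : ℝ)
    (hs : 0 < s) (hv : 0 < v) (hu : 0 < u) (htw : w < t)
    (hc1 : 0 < v * (t - u) + (u - w) * s) (hc2 : 0 < v * t - w * s)
    (hp1 : w * s - v * (t - u) ≠ 0) (hp2 : s ≠ v) :
    let ℓ : AffineSubspace ℝ Pt :=
      affineSpan ℝ ({pt (v / 2) ((w + u) / 2), pt (s / 2) (t / 2)} : Set Pt)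
    (segment ℝ (pt 0 0) (pt s t) ⊆ (ℓ : Set Pt) ↔ u = (v * t - w * s) / s) ∧
    (segment ℝ (pt 0 u) (pt v w) ⊆ (ℓ : Set Pt) ↔ (2 * v - s) * u + w * s - v * t = 0) := by
  intro ℓ
  have hac : v / 2 ≠ s / 2 := by
    intro h; exact hp2 (by linarith)
  have hL : ℓ = line[ℝ, pt (v / 2) ((w + u) / 2), pt (s / 2) (t / 2)] := rfl
  constructor
  · rw [hL, seg_subset_iff, memline hac, memline hac, eq_div_iff hs.ne']
    constructor
    · rintro ⟨h1, _⟩; linear_combination 4 * h1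
    · intro hg
      exact ⟨by linear_combination hg / 4, by linear_combination -hg / 4⟩
  · rw [hL, seg_subset_iff, memline hac, memline hac]
    constructor
    · rintro ⟨h1, _⟩; linear_combination 4 * h1
    · intro hg
      exact ⟨by linear_combination hg / 4, by linear_combination -hg / 4⟩

end
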